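/- Let G be a connected graph, let 𝒯 be a uniformly random spanning tree of G, and let 𝒮 be a reversible leaf reconfiguration strategy whose random input 𝓡 is independent of 𝒯. If 𝒯' is obtained from 𝒯 by a uniformly random 𝒮(𝒯,𝓡)-leaf reconfiguration, then 𝒯' is a uniformly random spanning tree of G (i.e., 𝒯' has the uniform distribution on spanning trees of G). -/

import Mathlib

/-- The spanning tree obtained from `T` by the leaf reconfiguration that, for each leaf
`v ∈ L`, removes the edge between `v` and its parent and attaches `v` to the new parent
`σ v` instead: its edges are the edges of `T` with both endpoints outside `L` together
with the edges `{v, σ v}` for `v ∈ L`. -/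
def reconfigured {V : Type} (T : SimpleGraph V) (L : Set V) (σ : V → V) : SimpleGraph V :=
  SimpleGraph.fromRel (fun x y => (T.Adj x y ∧ x ∉ L ∧ y ∉ L) ∨ (x ∈ L ∧ y = σ x))

/-- `(L, P)` is a leaf selection for the spanning tree `T` of `G`: every `v ∈ L` is a
leaf of `T` (exactly one neighbour in `T`), its parent (its unique `T`-neighbour)
belongs to `P v`, and `P v ⊆ N_G(v) \ L`. -/
def IsLeafSelection {V : Type} (G T : SimpleGraph V) (LP : Set V × (V → Set V)) : Prop :=
  ∀ v ∈ LP.1, (T.neighborSet v).ncard = 1 ∧ T.neighborSet v ⊆ LP.2 v ∧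
    LP.2 v ⊆ G.neighborSet v \ LP.1

/-- A choice function `σ` of new parents for the leaf selection `(L, P)`: for every
`v ∈ L` the new parent `σ v` belongs to `P v`, and `σ` is the identity off `L` (so that
counting such `σ` uniformly amounts to choosing the new parents independently and
uniformly at random). -/
def IsParentChoice {V : Type} (LP : Set V × (V → Set V)) (σ : V → V) : Prop :=
  (∀ v ∈ LP.1, σ v ∈ LP.2 v) ∧ ∀ v ∉ LP.1, σ v = v

namespace LeafRecfg
open SimpleGraph
variable {V : Type} {T : SimpleGraph V} {L : Set V} {σ : V → V}

lemma reconfigured_adj {x y : V} :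
    (reconfigured T L σ).Adj x y ↔ x ≠ y ∧
      ((T.Adj x y ∧ x ∉ L ∧ y ∉ L) ∨ (x ∈ L ∧ y = σ x) ∨ (y ∈ L ∧ x = σ y)) := by
  simp only [reconfigured, SimpleGraph.fromRel_adj]
  constructor
  · rintro ⟨hne, (⟨h, hx, hy⟩ | ⟨hx, rfl⟩) | (⟨h, hy, hx⟩ | ⟨hy, rfl⟩)⟩
    · exact ⟨hne, Or.inl ⟨h, hx, hy⟩⟩
    · exact ⟨hne, Or.inr (Or.inl ⟨hx, rfl⟩)⟩
    · exact ⟨hne, Or.inl ⟨h.symm, hx, hy⟩⟩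
    · exact ⟨hne, Or.inr (Or.inr ⟨hy, rfl⟩)⟩
  · rintro ⟨hne, ⟨h, hx, hy⟩ | ⟨hx, rfl⟩ | ⟨hy, rfl⟩⟩
    · exact ⟨hne, Or.inl (Or.inl ⟨h, hx, hy⟩)⟩
    · exact ⟨hne, Or.inl (Or.inr ⟨hx, rfl⟩)⟩
    · exact ⟨hne, Or.inr (Or.inr ⟨hy, rfl⟩)⟩

lemma adj_off {x y : V} (hx : x ∉ L) (hy : y ∉ L) :
    (reconfigured T L σ).Adj x y ↔ T.Adj x y := by
  rw [reconfigured_adj]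
  constructor
  · rintro ⟨hne, ⟨h, _, _⟩ | ⟨hxL, _⟩ | ⟨hyL, _⟩⟩
    · exact h
    · exact absurd hxL hx
    · exact absurd hyL hy
  · intro h
    exact ⟨h.ne, Or.inl ⟨h, hx, hy⟩⟩

lemma adj_mem (hσ : ∀ v ∈ L, σ v ∉ L) {v y : V} (hv : v ∈ L) :
    (reconfigured T L σ).Adj v y ↔ y = σ v := by
  rw [reconfigured_adj]
  constructor
  · rintro ⟨hne, ⟨_, hvL, _⟩ | ⟨_, rfl⟩ | ⟨hyL, rfl⟩⟩
    · exact absurd hv hvL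
    · rfl
    · exact absurd hv (hσ y hyL)
  · rintro rfl
    exact ⟨fun h => hσ v hv (h ▸ hv), Or.inr (Or.inl ⟨hv, rfl⟩)⟩

lemma reconfig_reconfig (σ₂ : V → V) :
    reconfigured (reconfigured T L σ) L σ₂ = reconfigured T L σ₂ := by
  ext x y
  have key : ∀ a b : V,
      ((reconfigured T L σ).Adj a b ∧ a ∉ L ∧ b ∉ L) ↔ (T.Adj a b ∧ a ∉ L ∧ b ∉ L) := by
    intro a b
    constructor
    · rintro ⟨h, ha, hb⟩; exact ⟨(adj_off ha hb).mp h, ha, hb⟩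
    · rintro ⟨h, ha, hb⟩; exact ⟨(adj_off ha hb).mpr h, ha, hb⟩
  rw [reconfigured_adj, key x y, reconfigured_adj]

lemma reconfig_eq_self {τ : V → V} (hleaf : ∀ v ∈ L, T.neighborSet v = {τ v}) :
    reconfigured T L τ = T := by
  ext x y
  rw [reconfigured_adj]
  constructor
  · rintro ⟨hne, ⟨h, _, _⟩ | ⟨hx, rfl⟩ | ⟨hy, rfl⟩⟩
    · exact h
    · have : τ x ∈ T.neighborSet x := by rw [hleaf x hx]; rfl
      exact this
    · have : τ y ∈ T.neighborSet y := by rw [hleaf y hy]; rfl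
      exact this.symm
  · intro h
    refine ⟨h.ne, ?_⟩
    by_cases hx : x ∈ L
    · have : y ∈ T.neighborSet x := h
      rw [hleaf x hx] at this
      exact Or.inr (Or.inl ⟨hx, this⟩)
    · by_cases hy : y ∈ L
      · have : x ∈ T.neighborSet y := h.symm
        rw [hleaf y hy] at this
        exact Or.inr (Or.inr ⟨hy, this⟩)
      · exact Or.inl ⟨h, hx, hy⟩

lemma reconfig_le {G : SimpleGraph V} (hTle : T ≤ G) (hσ : ∀ v ∈ L, G.Adj v (σ v)) :
    reconfigured T L σ ≤ G := by
  intro x y h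
  rw [reconfigured_adj] at h
  obtain ⟨hne, ⟨h, _, _⟩ | ⟨hx, rfl⟩ | ⟨hy, rfl⟩⟩ := h
  · exact hTle h
  · exact hσ x hx
  · exact (hσ y hy).symm

lemma sigma_eq_of_eq {σ₂ : V → V} (hσ : ∀ v ∈ L, σ v ∉ L) (hσ₂ : ∀ v ∈ L, σ₂ v ∉ L)
    (h : reconfigured T L σ = reconfigured T L σ₂) : ∀ v ∈ L, σ v = σ₂ v := by
  intro v hv
  have h1 : (reconfigured T L σ).Adj v (σ v) := (adj_mem hσ hv).mpr rfl
  rw [h, adj_mem hσ₂ hv] at h1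
  exact h1

lemma reconfig_isTree [Fintype V] [DecidableEq V] (hT : T.IsTree)
    (hleaf : ∀ v ∈ L, (T.neighborSet v).ncard = 1)
    (hσ : ∀ v ∈ L, σ v ∉ L) : (reconfigured T L σ).IsTree := by
  set R' := reconfigured T L σ with hR'
  haveI : Nonempty V := hT.isConnected.nonempty
  have hadjL : ∀ v ∈ L, R'.Adj v (σ v) := fun v hv => (adj_mem hσ hv).mpr rfl
  -- connectivity
  have aux : ∀ (u w : V) (p : T.Walk u w), p.IsPath → u ∉ L → w ∉ L → R'.Reachable u w := by
    intro u w p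
    induction p with
    | nil => intro _ _ _; rfl
    | @cons a b c h p ih =>
      intro hp haL hwL
      by_cases hbL : b ∈ L
      · cases p with
        | nil => exact absurd hbL hwL
        | @cons _ d _ h2 p2 =>
          obtain ⟨e, he⟩ := Set.ncard_eq_one.mp (hleaf b hbL)
          have h1 : a ∈ T.neighborSet b := h.symm
          have h2' : d ∈ T.neighborSet b := h2
          rw [he, Set.mem_singleton_iff] at h1 h2'
          have had : a = d := h1.trans h2'.symm
          rw [Walk.cons_isPath_iff] at hp
          have hmem : a ∈ (Walk.cons h2 p2).support := by
            rw [Walk.support_cons]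
            exact List.mem_cons_of_mem _ (had ▸ p2.start_mem_support)
          exact absurd hmem hp.2
      · have hab : R'.Adj a b := (adj_off haL hbL).mpr h
        exact hab.reachable.trans (ih hp.of_cons hbL hwL)
  have hconn : R'.Connected := by
    refine Connected.mk ?_
    intro u w
    have norm : ∀ z : V, ∃ z', z' ∉ L ∧ R'.Reachable z z' := by
      intro z
      by_cases hz : z ∈ L
      · exact ⟨σ z, hσ z hz, (hadjL z hz).reachable⟩
      · exact ⟨z, hz, Reachable.refl z⟩
    obtain ⟨u', hu'L, hu'⟩ := norm u
    obtain ⟨w', hw'L, hw'⟩ := norm w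
    obtain ⟨p⟩ := hT.isConnected u' w'
    exact hu'.trans ((aux u' w' p.toPath p.toPath.2 hu'L hw'L).trans hw'.symm)
  -- acyclicity
  have hacyc : R'.IsAcyclic := by
    intro a c hc
    have key : ∀ x ∈ c.support, x ∉ L := by
      intro x hx hxL
      have hc₁ := hc.rotate hx
      generalize c.rotate x hx = c₁ at hc₁
      cases c₁ with
      | nil => simpa using hc₁.three_le_length
      | @cons _ y _ h p =>
        obtain rfl : y = σ x := (adj_mem hσ hxL).mp h
        have hlen : 3 ≤ p.length + 1 := by simpa using hc₁.three_le_length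
        have hnodup : p.support.Nodup := by
          have := hc₁.support_nodup
          simpa [Walk.support_cons] using this
        have hnodup' : p.reverse.support.Nodup := by
          rw [Walk.support_reverse]; exact List.nodup_reverse.mpr hnodup
        have hxσ : x ≠ σ x := fun hh => hσ x hxL (hh ▸ hxL)
        obtain ⟨z, h2, q, hq⟩ := Walk.exists_eq_cons_of_ne hxσ p.reverse
        obtain rfl : z = σ x := (adj_mem hσ hxL).mp h2
        rw [hq, Walk.support_cons] at hnodup'
        have hqlen : 1 ≤ q.length := by
          have : p.reverse.length = q.length + 1 := by rw [hq, Walk.length_cons]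
          rw [Walk.length_reverse] at this
          omega
        cases q with
        | nil => simp at hqlen
        | @cons _ d _ h3 r =>
          have : (σ x) ∈ r.support := Walk.end_mem_support r
          have hnd := hnodup'.of_cons
          rw [Walk.support_cons] at hnd
          exact (List.nodup_cons.mp hnd).1 this
    have hedges : ∀ e ∈ c.edges, e ∈ T.edgeSet := by
      intro e he
      induction e with
      | h x y =>
        have hadj : R'.Adj x y := c.edges_subset_edgeSet he
        have hxs : x ∈ c.support := Walk.fst_mem_support_of_mem_edges c he
        have hys : y ∈ c.support := Walk.snd_mem_support_of_mem_edges c he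
        exact (adj_off (key x hxs) (key y hys)).mp hadj
    exact hT.IsAcyclic (c.transfer T hedges) (hc.transfer hedges)
  exact ⟨hconn, hacyc⟩

-- The unique neighbour of a leaf.
open Classical in
noncomputable def par (T : SimpleGraph V) (v : V) : V :=
  if h : ∃ a, T.neighborSet v = {a} then h.choose else v

lemma par_spec {v : V} (h : (T.neighborSet v).ncard = 1) :
    T.neighborSet v = {par T v} := by
  obtain ⟨a, ha⟩ := Set.ncard_eq_one.mp h
  have hex : ∃ a, T.neighborSet v = {a} := ⟨a, ha⟩
  rw [par, dif_pos hex]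
  exact hex.choose_spec

end LeafRecfg

open LeafRecfg in
/-- The key fixed-`R` computation: for each value `R` of the randomness, the total
probability of arriving at `T'` is `1`. -/
lemma key_sum (V : Type) [Fintype V] [DecidableEq V] (G : SimpleGraph V)
    (Ω : Type) (S : SimpleGraph V → Ω → Set V × (V → Set V))
    (hsel : ∀ T : SimpleGraph V, T ≤ G → T.IsTree → ∀ R : Ω, IsLeafSelection G T (S T R))
    (hrev : ∀ T : SimpleGraph V, T ≤ G → T.IsTree → ∀ R : Ω, ∀ σ : V → V,
      IsParentChoice (S T R) σ → S (reconfigured T (S T R).1 σ) R = S T R)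
    (T' : SimpleGraph V) (hT'le : T' ≤ G) (hT' : T'.IsTree) (R : Ω)
    (hfin : {T : SimpleGraph V | T ≤ G ∧ T.IsTree}.Finite) :
    ∑ T ∈ hfin.toFinset,
        (({σ : V → V | IsParentChoice (S T R) σ ∧
            reconfigured T (S T R).1 σ = T'}.ncard : ℝ) /
          ({σ : V → V | IsParentChoice (S T R) σ}.ncard : ℝ)) = 1 := by
  classical
  have hLS' := hsel T' hT'le hT' R
  -- facts about parent choices for `S T' R`
  have hoff : ∀ σ : V → V, IsParentChoice (S T' R) σ → ∀ v ∈ (S T' R).1, σ v ∉ (S T' R).1 :=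
    fun σ hσ v hv => ((hLS' v hv).2.2 (hσ.1 v hv)).2
  have hGadj : ∀ σ : V → V, IsParentChoice (S T' R) σ → ∀ v ∈ (S T' R).1, G.Adj v (σ v) :=
    fun σ hσ v hv => ((hLS' v hv).2.2 (hσ.1 v hv)).1
  -- the canonical parent map of T'
  set τ' : V → V := fun v => if v ∈ (S T' R).1 then par T' v else v with hτ'def
  have hτ'nbr : ∀ v ∈ (S T' R).1, T'.neighborSet v = {τ' v} := by
    intro v hv
    rw [hτ'def]
    simp only [if_pos hv]
    exact par_spec (hLS' v hv).1
  have hτ'pc : IsParentChoice (S T' R) τ' := by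
    constructor
    · intro v hv
      refine (hLS' v hv).2.1 ?_
      rw [hτ'nbr v hv]; rfl
    · intro v hv
      rw [hτ'def]; simp only [if_neg hv]
  -- the injection from parent choices to trees
  set D : Set (V → V) := {σ : V → V | IsParentChoice (S T' R) σ} with hDdef
  set g : (V → V) → SimpleGraph V := fun σ' => reconfigured T' (S T' R).1 σ' with hgdef
  have hgle : ∀ σ' ∈ D, g σ' ≤ G := fun σ' hσ' =>
    reconfig_le hT'le (hGadj σ' hσ')
  have hgtree : ∀ σ' ∈ D, (g σ').IsTree := fun σ' hσ' =>
    reconfig_isTree hT' (fun v hv => (hLS' v hv).1) (hoff σ' hσ')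
  have hgS : ∀ σ' ∈ D, S (g σ') R = S T' R := fun σ' hσ' => hrev T' hT'le hT' R σ' hσ'
  have hginj : Set.InjOn g D := by
    intro σ₁ h1 σ₂ h2 heq
    funext v
    by_cases hv : v ∈ (S T' R).1
    · exact sigma_eq_of_eq (hoff σ₁ h1) (hoff σ₂ h2) heq v hv
    · rw [h1.2 v hv, h2.2 v hv]
  -- evaluation of the summand
  have hval : ∀ T : SimpleGraph V, T ≤ G → T.IsTree →
      (({σ : V → V | IsParentChoice (S T R) σ ∧
          reconfigured T (S T R).1 σ = T'}.ncard : ℝ) /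
        ({σ : V → V | IsParentChoice (S T R) σ}.ncard : ℝ)) =
      if T ∈ g '' D then 1 / (D.ncard : ℝ) else 0 := by
    intro T hTle hTt
    by_cases hmem : T ∈ g '' D
    · rw [if_pos hmem]
      obtain ⟨σ', hσ'D, hTeq⟩ := hmem
      subst hTeq
      have hST : S (g σ') R = S T' R := hgS σ' hσ'D
      have hnum : {σ : V → V | IsParentChoice (S (g σ') R) σ ∧
          reconfigured (g σ') (S (g σ') R).1 σ = T'} = {τ'} := by
        ext σ
        simp only [Set.mem_setOf_eq, Set.mem_singleton_iff, hST]
        constructor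
        · rintro ⟨hpc, heq⟩
          funext v
          by_cases hv : v ∈ (S T' R).1
          · have h1 : (reconfigured (g σ') (S T' R).1 σ).Adj v (σ v) :=
              (adj_mem (hoff σ hpc) hv).mpr rfl
            rw [heq] at h1
            have h2 : σ v ∈ T'.neighborSet v := h1
            rw [hτ'nbr v hv] at h2
            exact h2
          · rw [hpc.2 v hv, hτ'def]; simp only [if_neg hv]
        · rintro rfl
          refine ⟨hτ'pc, ?_⟩
          show reconfigured (reconfigured T' (S T' R).1 σ') (S T' R).1 τ' = T'
          rw [reconfig_reconfig]
          exact reconfig_eq_self hτ'nbr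
      have hden : {σ : V → V | IsParentChoice (S (g σ') R) σ} = D := by
        rw [hDdef]; ext σ; simp only [Set.mem_setOf_eq, hST]
      rw [hnum, hden, Set.ncard_singleton]
      norm_num
    · rw [if_neg hmem]
      have hnum : {σ : V → V | IsParentChoice (S T R) σ ∧
          reconfigured T (S T R).1 σ = T'} = ∅ := by
        rw [Set.eq_empty_iff_forall_notMem]
        rintro σ ⟨hpc, heq⟩
        have hST : S T' R = S T R := by
          rw [← heq]; exact hrev T hTle hTt R σ hpc
        have hL : (S T R).1 = (S T' R).1 := (congrArg Prod.fst hST).symm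
        rw [hL] at heq
        rw [← hST] at hpc
        have hselT := hsel T hTle hTt R
        rw [← hST] at hselT
        -- the canonical parent map of T
        set τT : V → V := fun v => if v ∈ (S T' R).1 then par T v else v with hτTdef
        have hτTnbr : ∀ v ∈ (S T' R).1, T.neighborSet v = {τT v} := by
          intro v hv
          rw [hτTdef]
          simp only [if_pos hv]
          exact par_spec (hselT v hv).1
        have hτTpc : IsParentChoice (S T' R) τT := by
          constructor
          · intro v hv
            refine (hselT v hv).2.1 ?_
            rw [hτTnbr v hv]; rfl
          · intro v hv
            rw [hτTdef]; simp only [if_neg hv]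
        refine hmem ⟨τT, hτTpc, ?_⟩
        show reconfigured T' (S T' R).1 τT = T
        have hrw : reconfigured T' (S T' R).1 τT =
            reconfigured (reconfigured T (S T' R).1 σ) (S T' R).1 τT := by rw [heq]
        rw [hrw, reconfig_reconfig]
        exact reconfig_eq_self hτTnbr
      rw [hnum]
      simp
  -- the sum
  have hDfin : D.Finite := Set.toFinite _
  have hDpos : 0 < D.ncard := (Set.ncard_pos hDfin).mpr ⟨τ', hτ'pc⟩
  have hgDfin : (g '' D).Finite := Set.toFinite _
  have hsub : hgDfin.toFinset ⊆ hfin.toFinset := by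
    intro T hT
    rw [Set.Finite.mem_toFinset] at hT ⊢
    obtain ⟨σ', hσ', rfl⟩ := hT
    exact ⟨hgle σ' hσ', hgtree σ' hσ'⟩
  calc ∑ T ∈ hfin.toFinset,
        (({σ : V → V | IsParentChoice (S T R) σ ∧
            reconfigured T (S T R).1 σ = T'}.ncard : ℝ) /
          ({σ : V → V | IsParentChoice (S T R) σ}.ncard : ℝ))
      = ∑ T ∈ hfin.toFinset, (if T ∈ hgDfin.toFinset then 1 / (D.ncard : ℝ) else 0) := by
        refine Finset.sum_congr rfl (fun T hT => ?_)
        rw [Set.Finite.mem_toFinset] at hT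
        rw [hval T hT.1 hT.2]
        simp [Set.Finite.mem_toFinset]
    _ = ∑ T ∈ hfin.toFinset ∩ hgDfin.toFinset, (1 / (D.ncard : ℝ)) :=
        Finset.sum_ite_mem _ _ _
    _ = ∑ _T ∈ hgDfin.toFinset, (1 / (D.ncard : ℝ)) := by
        rw [Finset.inter_eq_right.mpr hsub]
    _ = (hgDfin.toFinset.card : ℝ) * (1 / (D.ncard : ℝ)) := by
        rw [Finset.sum_const, nsmul_eq_mul]
    _ = 1 := by
        have hcard : hgDfin.toFinset.card = D.ncard := by
          rw [← Set.ncard_eq_toFinset_card _ hgDfin]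
          exact Set.ncard_image_of_injOn hginj
        rw [hcard, mul_one_div, div_self]
        exact Nat.cast_ne_zero.mpr hDpos.ne'

/-- Let `G` be a connected graph, let `𝒯` be a uniformly random spanning tree of `G`,
and let `S` be a reversible leaf reconfiguration strategy whose random input `𝓡` (with
values in `Ω`, distributed according to `μ`) is independent of `𝒯`. If `𝒯'` is obtained
from `𝒯` by a uniformly random `S(𝒯,𝓡)`-leaf reconfiguration, then `𝒯'` is a uniformly
random spanning tree of `G`: for every spanning tree `T'` of `G`, `ℙ(𝒯' = T') = 1/(number
of spanning trees)`. Here `ℙ(𝒯' = T')` is written out as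
`(1/#spanning trees) · Σ_T Σ_R μ(R) · ℙ(T → T' under a uniform S(T,R)-reconfiguration)`,
the inner probability being a ratio of counts of parent-choice functions. -/
theorem reversible_strategy_preserves_uniformity
    (V : Type) [Fintype V] [DecidableEq V] (G : SimpleGraph V) (hG : G.Connected)
    (Ω : Type) [Fintype Ω] (μ : Ω → ℝ) (hμ0 : ∀ R, 0 ≤ μ R) (hμ1 : ∑ R : Ω, μ R = 1)
    (S : SimpleGraph V → Ω → Set V × (V → Set V))
    (hsel : ∀ T : SimpleGraph V, T ≤ G → T.IsTree → ∀ R : Ω, IsLeafSelection G T (S T R))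
    (hrev : ∀ T : SimpleGraph V, T ≤ G → T.IsTree → ∀ R : Ω, ∀ σ : V → V,
      IsParentChoice (S T R) σ → S (reconfigured T (S T R).1 σ) R = S T R)
    (T' : SimpleGraph V) (hT'le : T' ≤ G) (hT' : T'.IsTree) :
    (∑ᶠ T ∈ {T : SimpleGraph V | T ≤ G ∧ T.IsTree}, ∑ R : Ω, μ R *
          (({σ : V → V | IsParentChoice (S T R) σ ∧
              reconfigured T (S T R).1 σ = T'}.ncard : ℝ) /
            ({σ : V → V | IsParentChoice (S T R) σ}.ncard : ℝ))) /
        ({T : SimpleGraph V | T ≤ G ∧ T.IsTree}.ncard : ℝ) =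
      1 / ({T : SimpleGraph V | T ≤ G ∧ T.IsTree}.ncard : ℝ) := by
  classical
  have hfin : {T : SimpleGraph V | T ≤ G ∧ T.IsTree}.Finite := Set.toFinite _
  have h2 : ∀ R : Ω, (∑ T ∈ hfin.toFinset, μ R *
      (({σ : V → V | IsParentChoice (S T R) σ ∧
          reconfigured T (S T R).1 σ = T'}.ncard : ℝ) /
        ({σ : V → V | IsParentChoice (S T R) σ}.ncard : ℝ))) = μ R := by
    intro R
    rw [← Finset.mul_sum, key_sum V G Ω S hsel hrev T' hT'le hT' R hfin, mul_one]
  have hnum : (∑ᶠ T ∈ {T : SimpleGraph V | T ≤ G ∧ T.IsTree}, ∑ R : Ω, μ R *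
      (({σ : V → V | IsParentChoice (S T R) σ ∧
          reconfigured T (S T R).1 σ = T'}.ncard : ℝ) /
        ({σ : V → V | IsParentChoice (S T R) σ}.ncard : ℝ))) = 1 := by
    rw [finsum_mem_eq_finite_toFinset_sum _ hfin, Finset.sum_comm]
    rw [Finset.sum_congr rfl (fun R _ => h2 R), hμ1]
  rw [hnum]
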